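/- For every x ∈ J the following are equivalent: (1) x is singular, i.e. there exists an idempotent e ∈ A with e ≠ 1 such that ex = xe = x; (2) there exists c ∈ A with c ∉ J such that cx = xc = 0. -/

import Mathlib

/-- An element `x` (of the radical `J`) is *singular* if there is an idempotent `e ≠ 1`
of the algebra with `e * x = x * e = x`; otherwise it is *regular*. -/
def IsSingular {A : Type*} [Ring A] (x : A) : Prop :=
  ∃ e : A, IsIdempotentElem e ∧ e ≠ 1 ∧ e * x = x ∧ x * e = x

/-- In a finite monoid, some positive power of any element is idempotent. -/
lemma exists_pow_idem {M : Type*} [Monoid M] [Finite M] (c : M) :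
    ∃ k : ℕ, 0 < k ∧ c ^ k * c ^ k = c ^ k := by
  obtain ⟨m, n, hmn, h⟩ := Finite.exists_ne_map_eq_of_infinite (fun i : ℕ => c ^ i)
  wlog hlt : m < n generalizing m n
  · exact this n m hmn.symm h.symm (by omega)
  set d := n - m with hd
  have hd1 : 0 < d := by omega
  have hper : ∀ i, m ≤ i → c ^ (i + d) = c ^ i := by
    intro i hi
    have h1 : c ^ (i + d) = c ^ (i - m) * c ^ n := by
      rw [← pow_add]; congr 1; omega
    have h2 : c ^ i = c ^ (i - m) * c ^ m := by
      rw [← pow_add]; congr 1; omega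
    have h' : c ^ m = c ^ n := h
    rw [h1, ← h', h2]
  have hper' : ∀ j i, m ≤ i → c ^ (i + j * d) = c ^ i := by
    intro j
    induction j with
    | zero => simp
    | succ j ih =>
      intro i hi
      have : i + (j + 1) * d = (i + d) + j * d := by ring
      rw [this, ih _ (by omega), hper _ hi]
  refine ⟨(m + 1) * d, by positivity, ?_⟩
  rw [← pow_add]
  exact hper' (m + 1) ((m + 1) * d) (by nlinarith)

/-- Lemma 2.2 (for elements of `J`): `x ∈ J` is singular iff there is `c ∉ J`
with `c * x = x * c = 0`.  Here `A` is a finite-dimensional unital associative algebra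
over a finite field, `J` is its Jacobson radical, and `A` is reduced, i.e. `A/J` is
commutative. -/
theorem singular_iff_exists_annihilator
    {F A : Type*} [Field F] [Fintype F] [Ring A] [Algebra F A] [FiniteDimensional F A]
    (J : Ideal A) (hJ : J = (⊥ : Ideal A).jacobson)
    (hred : ∀ a b : A, a * b - b * a ∈ J)
    (x : A) (hx : x ∈ J) :
    IsSingular x ↔ ∃ c : A, c ∉ J ∧ c * x = 0 ∧ x * c = 0 := by
  constructor
  · rintro ⟨e, he, he1, hex, hxe⟩
    refine ⟨1 - e, ?_, by rw [sub_mul, one_mul, hex, sub_self],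
      by rw [mul_sub, mul_one, hxe, sub_self]⟩
    intro hmem
    rw [hJ] at hmem
    obtain ⟨z, hz⟩ := Ideal.mem_jacobson_iff.mp hmem (-1)
    simp only [Ideal.mem_bot] at hz
    have hze : z * e = 1 := by
      have h' : z * e - 1 = 0 := by rw [← hz]; noncomm_ring
      exact sub_eq_zero.mp h'
    exact he1 (by calc e = (z * e) * e := by rw [hze, one_mul]
      _ = z * (e * e) := by rw [mul_assoc]
      _ = z * e := by rw [he]
      _ = 1 := hze)
  · rintro ⟨c, hcJ, hcx, hxc⟩
    have hAnt : Nontrivial A := by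
      by_contra h
      rw [not_nontrivial_iff_subsingleton] at h
      exact hcJ (by rw [Subsingleton.elim c 0]; exact J.zero_mem)
    -- squares: a * a ∈ J → a ∈ J
    have hsq : ∀ a : A, a * a ∈ J → a ∈ J := by
      intro a ha
      rw [hJ]
      apply Ideal.mem_sInf.mpr
      rintro M ⟨-, hM⟩
      by_contra haM
      have hJM : J ≤ M := by rw [hJ]; exact sInf_le ⟨bot_le, hM⟩
      have htop : M ⊔ Ideal.span {a} = ⊤ :=
        hM.1.2 (M ⊔ Ideal.span {a}) (lt_of_le_of_ne le_sup_left (fun heq => haM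
          (heq ▸ Submodule.mem_sup_right (Ideal.mem_span_singleton_self a))))
      obtain ⟨m, hm, s, hs, hms⟩ :=
        Submodule.mem_sup.mp (htop ▸ Submodule.mem_top : (1 : A) ∈ M ⊔ Ideal.span {a})
      obtain ⟨r, hr⟩ := Ideal.mem_span_singleton'.mp hs
      have key : a = (m * a - a * m) + a * m + r * (a * a) := by
        have h1 : (1 : A) = m + r * a := by rw [hr]; exact hms.symm
        calc a = (m + r * a) * a := by rw [← h1, one_mul]
          _ = (m * a - a * m) + a * m + r * (a * a) := by noncomm_ring
      rw [key] at haM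
      exact haM (M.add_mem (M.add_mem (hJM (hred m a))
        (M.smul_mem a hm)) (M.smul_mem r (hJM ha)))
    have h2 : ∀ n : ℕ, ∀ a : A, a ^ (2 ^ n) ∈ J → a ∈ J := by
      intro n
      induction n with
      | zero => intro a ha; simpa using ha
      | succ n ih =>
        intro a ha
        apply ih
        apply hsq
        rw [← pow_add]
        have h' : 2 ^ n + 2 ^ n = 2 ^ (n + 1) := by ring
        rw [h']; exact ha
    haveI : Finite A := Module.finite_of_finite F
    obtain ⟨k, hk, hek⟩ := exists_pow_idem c
    -- c ^ k ∉ J, in particular c ^ k ≠ 0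
    have hckJ : c ^ k ∉ J := by
      intro hckJ
      apply hcJ
      apply h2 k
      have h2k : 2 ^ k = (2 ^ k - k) + k := by
        have : k ≤ 2 ^ k := Nat.le_of_lt (Nat.lt_two_pow_self (n := k))
        omega
      rw [h2k, pow_add]
      exact J.smul_mem (c ^ (2 ^ k - k)) hckJ
    refine ⟨1 - c ^ k, ?_, ?_, ?_, ?_⟩
    · show (1 - c ^ k) * (1 - c ^ k) = 1 - c ^ k
      rw [mul_sub, sub_mul, sub_mul, one_mul, mul_one, hek]; noncomm_ring
    · intro h
      apply hckJ
      have h0 : c ^ k = 0 := sub_eq_self.mp h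
      rw [h0]; exact J.zero_mem
    · have hckx : c ^ k * x = 0 := by
        have : c ^ k = c ^ (k - 1) * c := by
          conv_lhs => rw [show k = (k - 1) + 1 by omega]
          rw [pow_succ]
        rw [this, mul_assoc, hcx, mul_zero]
      rw [sub_mul, one_mul, hckx, sub_zero]
    · have hxck : x * c ^ k = 0 := by
        have : c ^ k = c * c ^ (k - 1) := by
          conv_lhs => rw [show k = 1 + (k - 1) by omega]
          rw [pow_add, pow_one]
        rw [this, ← mul_assoc, hxc, zero_mul]
      rw [mul_sub, mul_one, hxck, sub_zero]
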